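/- arXiv:2003.09265 — 2 statements merged into one kernel-verified Lean document; each statement's English description precedes it below -/
import Mathlib

section
/- Let 𝒜 = {A₁, A₂} be two finite cameras A_i = [G_i | t_i] with distinct centers c₁, c₂ (normalized with last coordinate 1), principal rays n₁, n₂, and epipoles e₁₂ = A₁c₂, e₂₁ = A₂c₁. Fix j ∈ {1,2} and let i be the other index. If n_iᵀc_j ≥ 0 (i.e., the center c_j has nonnegative depth in the camera A_i), then E_j ⊆ C_𝒜. Otherwise, the epipole pair (e₁₂, e₂₁) is the only point of E_j that lies in C_𝒜. -/
open Matrix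

noncomputable section

/-- Left 3x3 block `G` of a 3x4 camera matrix `A = [G | t]`. -/
def leftBlock (A : Matrix (Fin 3) (Fin 4) ℝ) : Matrix (Fin 3) (Fin 3) ℝ :=
  Matrix.of fun i j => A i j.castSucc

/-- Last column `t` of a 3x4 camera matrix `A = [G | t]`. -/
def tCol (A : Matrix (Fin 3) (Fin 4) ℝ) : Fin 3 → ℝ := fun i => A i 3

/-- A camera is finite if its left 3x3 block is invertible. -/
def FiniteCam (A : Matrix (Fin 3) (Fin 4) ℝ) : Prop := (leftBlock A).det ≠ 0

/-- The center `(-G⁻¹ t, 1)` of a finite camera. -/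
def camCenter (A : Matrix (Fin 3) (Fin 4) ℝ) : Fin 4 → ℝ :=
  Fin.snoc (-((leftBlock A)⁻¹ *ᵥ tCol A)) 1

/-- The principal ray `det G • (third row of A)`. -/
def principalRay (A : Matrix (Fin 3) (Fin 4) ℝ) : Fin 4 → ℝ :=
  (leftBlock A).det • A 2

/-- `n_∞ = (0,0,0,1)`. -/
def nInf : Fin 4 → ℝ := Fin.snoc (0 : Fin 3 → ℝ) 1

/-- The chiral domain `D_𝒜`: the closure, within `ℝ⁴ ∖ {0}` (i.e. ambient closure
intersected with `ℝ⁴ ∖ {0}`), of the set of finite vectors (last coordinate nonzero)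
having positive depth in every camera of the arrangement. -/
def chiralDomain {m : ℕ} (A : Fin m → Matrix (Fin 3) (Fin 4) ℝ) : Set (Fin 4 → ℝ) :=
  closure {q : Fin 4 → ℝ | nInf ⬝ᵥ q ≠ 0 ∧ ∀ i, 0 < (principalRay (A i) ⬝ᵥ q) * (nInf ⬝ᵥ q)}
    ∩ {q : Fin 4 → ℝ | q ≠ 0}

/-- The joint image `J_𝒜` (at the level of representatives): tuples of nonzero vectors
representing `(A₁ q, …, A_m q)` for some `q ∈ ℙ³` that is not a camera center. -/
def jointImage {m : ℕ} (A : Fin m → Matrix (Fin 3) (Fin 4) ℝ) :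
    Set (Fin m → Fin 3 → ℝ) :=
  {p | (∀ i, p i ≠ 0) ∧
    ∃ q : Fin 4 → ℝ, q ≠ 0 ∧ ∀ i, ∃ c : ℝ, c ≠ 0 ∧ p i = c • (A i *ᵥ q)}

/-- The chiral joint image `X_𝒜 = φ_𝒜(D_𝒜)` (at the level of representatives). -/
def chiralJointImage {m : ℕ} (A : Fin m → Matrix (Fin 3) (Fin 4) ℝ) :
    Set (Fin m → Fin 3 → ℝ) :=
  {p | (∀ i, p i ≠ 0) ∧
    ∃ q ∈ chiralDomain A, ∀ i, ∃ c : ℝ, c ≠ 0 ∧ p i = c • (A i *ᵥ q)}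

/-- `a_i = G_i⁻¹ p_i`. -/
def aVec (A : Matrix (Fin 3) (Fin 4) ℝ) (p : Fin 3 → ℝ) : Fin 3 → ℝ :=
  (leftBlock A)⁻¹ *ᵥ p

/-- `b_ij = G_i⁻¹ t_i - G_j⁻¹ t_j`. -/
def bVec (A B : Matrix (Fin 3) (Fin 4) ℝ) : Fin 3 → ℝ :=
  (leftBlock A)⁻¹ *ᵥ tCol A - (leftBlock B)⁻¹ *ᵥ tCol B

/-- The chirality constraint set `C_𝒜`, cut out by the biquadratic inequalities
`det(G_i)·p_{i3}·((a_i × a_j)ᵀ(b_ij × a_j)) ≥ 0` and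
`det(G_i)·det(G_j)·p_{i3}·p_{j3}·((b_ij × a_i)ᵀ(b_ij × a_j)) ≥ 0` for all `i, j`. -/
def CSet {m : ℕ} (A : Fin m → Matrix (Fin 3) (Fin 4) ℝ) :
    Set (Fin m → Fin 3 → ℝ) :=
  {p | ∀ i j,
    0 ≤ (leftBlock (A i)).det * p i 2 *
        ((aVec (A i) (p i) ⨯₃ aVec (A j) (p j)) ⬝ᵥ (bVec (A i) (A j) ⨯₃ aVec (A j) (p j))) ∧
    0 ≤ (leftBlock (A i)).det * (leftBlock (A j)).det * p i 2 * p j 2 *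
        ((bVec (A i) (A j) ⨯₃ aVec (A i) (p i)) ⬝ᵥ (bVec (A i) (A j) ⨯₃ aVec (A j) (p j)))}

/-- `E_j`: tuples whose `i`-th coordinate, for `i ≠ j`, represents the epipole
`e_ij = A_i c_j`, with free `j`-th coordinate. -/
def Eset {m : ℕ} (A : Fin m → Matrix (Fin 3) (Fin 4) ℝ) (j : Fin m) :
    Set (Fin m → Fin 3 → ℝ) :=
  {p | (∀ i, p i ≠ 0) ∧ ∀ i, i ≠ j → ∃ c : ℝ, c ≠ 0 ∧ p i = c • (A i *ᵥ camCenter (A j))}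

lemma mulVec_inv_cancel {G : Matrix (Fin 3) (Fin 3) ℝ} (h : G.det ≠ 0) (v : Fin 3 → ℝ) :
    G *ᵥ (G⁻¹ *ᵥ v) = v := by
  rw [Matrix.mulVec_mulVec, Matrix.mul_nonsing_inv _ (isUnit_iff_ne_zero.mpr h),
    Matrix.one_mulVec]

lemma inv_mulVec_cancel {G : Matrix (Fin 3) (Fin 3) ℝ} (h : G.det ≠ 0) (v : Fin 3 → ℝ) :
    G⁻¹ *ᵥ (G *ᵥ v) = v := by
  rw [Matrix.mulVec_mulVec, Matrix.nonsing_inv_mul _ (isUnit_iff_ne_zero.mpr h),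
    Matrix.one_mulVec]

lemma mulVec_camCenter (A B : Matrix (Fin 3) (Fin 4) ℝ) (hA : FiniteCam A) :
    A *ᵥ camCenter B = leftBlock A *ᵥ bVec A B := by
  have h1 : leftBlock A *ᵥ bVec A B
      = tCol A - leftBlock A *ᵥ ((leftBlock B)⁻¹ *ᵥ tCol B) := by
    rw [bVec, Matrix.mulVec_sub, mulVec_inv_cancel hA]
  rw [h1]
  funext r
  simp only [Matrix.mulVec, dotProduct, camCenter, Pi.sub_apply,
    Fin.sum_univ_castSucc (n := 3), Fin.snoc_castSucc, Fin.snoc_last, leftBlock, tCol,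
    Matrix.of_apply, Pi.neg_apply, mul_neg, mul_one]
  have : (Fin.last 3) = (3 : Fin 4) := rfl
  rw [this]
  ring_nf
  rw [Finset.sum_neg_distrib]
  ring

lemma smul_cross (c : ℝ) (v w : Fin 3 → ℝ) : (c • v) ⨯₃ w = c • (v ⨯₃ w) := by
  rw [LinearMap.map_smul, LinearMap.smul_apply]

lemma cross_smul (c : ℝ) (v w : Fin 3 → ℝ) : v ⨯₃ (c • w) = c • (v ⨯₃ w) :=
  map_smul _ _ _

lemma zero_cross (w : Fin 3 → ℝ) : (0 : Fin 3 → ℝ) ⨯₃ w = 0 := by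
  rw [map_zero, LinearMap.zero_apply]

lemma neg_cross' (v w : Fin 3 → ℝ) : (-v) ⨯₃ w = -(v ⨯₃ w) := by
  rw [map_neg, LinearMap.neg_apply]

lemma dot_self_nonneg (v : Fin 3 → ℝ) : 0 ≤ v ⬝ᵥ v :=
  Finset.sum_nonneg fun _ _ => mul_self_nonneg _

lemma collinear_of_cross_eq_zero {b a : Fin 3 → ℝ} (hb : b ≠ 0) (h : b ⨯₃ a = 0) :
    ∃ c : ℝ, a = c • b := by
  have e0 : b 1 * a 2 - b 2 * a 1 = 0 := by
    have := congrFun h 0; simpa [cross_apply] using this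
  have e1 : b 2 * a 0 - b 0 * a 2 = 0 := by
    have := congrFun h 1; simpa [cross_apply] using this
  have e2 : b 0 * a 1 - b 1 * a 0 = 0 := by
    have := congrFun h 2; simpa [cross_apply] using this
  obtain ⟨k, hk⟩ := Function.ne_iff.mp hb
  have hk : b k ≠ 0 := hk
  refine ⟨a k / b k, ?_⟩
  funext m
  simp only [Pi.smul_apply, smul_eq_mul]
  have hkc : k = 0 ∨ k = 1 ∨ k = 2 := by omega
  have hmc : m = 0 ∨ m = 1 ∨ m = 2 := by omega
  rcases hkc with rfl | rfl | rfl <;> rcases hmc with rfl | rfl | rfl <;>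
    field_simp <;> linarith

lemma bVec_anti (A B : Matrix (Fin 3) (Fin 4) ℝ) : bVec A B = -bVec B A := by
  simp [bVec, neg_sub]

lemma depth_eq (A B : Matrix (Fin 3) (Fin 4) ℝ) (hA : FiniteCam A) :
    principalRay A ⬝ᵥ camCenter B = (leftBlock A).det * (leftBlock A *ᵥ bVec A B) 2 := by
  rw [← mulVec_camCenter A B hA, principalRay, smul_dotProduct, smul_eq_mul]
  rfl

lemma aVec_of_smul_mulVec (A : Matrix (Fin 3) (Fin 4) ℝ) (hA : FiniteCam A)
    (c : ℝ) (v p : Fin 3 → ℝ) (hp : p = c • (leftBlock A *ᵥ v)) :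
    aVec A p = c • v := by
  rw [aVec, hp, Matrix.mulVec_smul, inv_mulVec_cancel hA]

lemma key_eq (A : Fin 2 → Matrix (Fin 3) (Fin 4) ℝ) (hfin : ∀ k, FiniteCam (A k))
    (i j : Fin 2) (p : Fin 2 → Fin 3 → ℝ) (c : ℝ)
    (hpi : p i = c • (leftBlock (A i) *ᵥ bVec (A i) (A j))) :
    (leftBlock (A i)).det * p i 2 *
      ((aVec (A i) (p i) ⨯₃ aVec (A j) (p j)) ⬝ᵥ (bVec (A i) (A j) ⨯₃ aVec (A j) (p j)))
    = c ^ 2 * (principalRay (A i) ⬝ᵥ camCenter (A j)) *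
      ((bVec (A i) (A j) ⨯₃ aVec (A j) (p j)) ⬝ᵥ (bVec (A i) (A j) ⨯₃ aVec (A j) (p j))) := by
  have hai : aVec (A i) (p i) = c • bVec (A i) (A j) :=
    aVec_of_smul_mulVec (A i) (hfin i) c _ _ hpi
  have hpi2 : p i 2 = c * (leftBlock (A i) *ᵥ bVec (A i) (A j)) 2 := by rw [hpi]; rfl
  rw [hai, smul_cross, smul_dotProduct, hpi2, depth_eq (A i) (A j) (hfin i),
    smul_eq_mul]
  ring

lemma bVec_self (A : Matrix (Fin 3) (Fin 4) ℝ) : bVec A A = 0 := sub_self _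

lemma fin2_cases (k i j : Fin 2) (h : i ≠ j) : k = i ∨ k = j := by omega

lemma mem_CSet_aux (A : Fin 2 → Matrix (Fin 3) (Fin 4) ℝ) (hfin : ∀ k, FiniteCam (A k))
    (i j : Fin 2) (hij : i ≠ j) (p : Fin 2 → Fin 3 → ℝ) (c : ℝ)
    (hpi : p i = c • (leftBlock (A i) *ᵥ bVec (A i) (A j)))
    (hkey : 0 ≤ (leftBlock (A i)).det * p i 2 *
      ((aVec (A i) (p i) ⨯₃ aVec (A j) (p j)) ⬝ᵥ (bVec (A i) (A j) ⨯₃ aVec (A j) (p j)))) :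
    p ∈ CSet A := by
  have hai : aVec (A i) (p i) = c • bVec (A i) (A j) :=
    aVec_of_smul_mulVec (A i) (hfin i) c _ _ hpi
  have hzero1 : bVec (A i) (A j) ⨯₃ aVec (A i) (p i) = 0 := by
    rw [hai, cross_smul, cross_self, smul_zero]
  have hzero2 : bVec (A j) (A i) ⨯₃ aVec (A i) (p i) = 0 := by
    rw [bVec_anti (A j) (A i), hai, cross_smul, neg_cross', cross_self, neg_zero, smul_zero]
  intro k l
  have hkc := fin2_cases k i j hij
  have hlc := fin2_cases l i j hij
  rcases hkc with rfl | rfl <;> rcases hlc with rfl | rfl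
  · refine ⟨?_, ?_⟩ <;>
      simp [cross_self, bVec_self, zero_cross, zero_dotProduct, mul_zero]
  · exact ⟨hkey, by rw [hzero1, zero_dotProduct, mul_zero]⟩
  · constructor
    · rw [hzero2, dotProduct_zero, mul_zero]
    · rw [hzero2, dotProduct_zero, mul_zero]
  · refine ⟨?_, ?_⟩ <;>
      simp [cross_self, bVec_self, zero_cross, zero_dotProduct, mul_zero]

lemma master (A : Fin 2 → Matrix (Fin 3) (Fin 4) ℝ) (hfin : ∀ k, FiniteCam (A k))
    (i j : Fin 2) (hij : i ≠ j) (hb : bVec (A i) (A j) ≠ 0) :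
    (0 ≤ principalRay (A i) ⬝ᵥ camCenter (A j) → Eset A j ⊆ CSet A) ∧
    (principalRay (A i) ⬝ᵥ camCenter (A j) < 0 →
      ∀ p ∈ Eset A j, (p ∈ CSet A ↔
        ∃ c : ℝ, c ≠ 0 ∧ p j = c • (A j *ᵥ camCenter (A i)))) := by
  constructor
  · intro hD p hp
    obtain ⟨hpne, hep⟩ := hp
    obtain ⟨c, hc, hpi⟩ := hep i hij
    rw [mulVec_camCenter _ _ (hfin i)] at hpi
    refine mem_CSet_aux A hfin i j hij p c hpi ?_
    rw [key_eq A hfin i j p c hpi]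
    exact mul_nonneg (mul_nonneg (sq_nonneg c) hD) (dot_self_nonneg _)
  · intro hD p hp
    obtain ⟨hpne, hep⟩ := hp
    obtain ⟨c, hc, hpi⟩ := hep i hij
    rw [mulVec_camCenter _ _ (hfin i)] at hpi
    have hrec : leftBlock (A j) *ᵥ aVec (A j) (p j) = p j :=
      mulVec_inv_cancel (hfin j) (p j)
    constructor
    · intro hpC
      have hkey := (hpC i j).1
      rw [key_eq A hfin i j p c hpi] at hkey
      set w := bVec (A i) (A j) ⨯₃ aVec (A j) (p j) with hw
      have hWnn := dot_self_nonneg w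
      have hc2 : (0 : ℝ) < c ^ 2 := by positivity
      have hW : w ⬝ᵥ w = 0 := by
        rcases hWnn.lt_or_eq with hpos | heq
        · exfalso
          have h1 : 0 < c ^ 2 * (w ⬝ᵥ w) := mul_pos hc2 hpos
          nlinarith
        · exact heq.symm
      have hw0 : w = 0 := by rwa [dotProduct_self_eq_zero] at hW
      obtain ⟨c', hc'⟩ := collinear_of_cross_eq_zero hb hw0
      have haj_ne : aVec (A j) (p j) ≠ 0 := by
        intro h0
        apply hpne j
        rw [← hrec, h0, Matrix.mulVec_zero]
      have hc'ne : c' ≠ 0 := by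
        intro h0
        exact haj_ne (by rw [hc', h0, zero_smul])
      refine ⟨-c', neg_ne_zero.mpr hc'ne, ?_⟩
      rw [mulVec_camCenter _ _ (hfin j), bVec_anti (A j) (A i), Matrix.mulVec_neg,
        smul_neg, neg_smul, neg_neg, ← Matrix.mulVec_smul, ← hc']
      exact hrec.symm
    · rintro ⟨c', hc', hpj⟩
      apply mem_CSet_aux A hfin i j hij p c hpi
      have haj : aVec (A j) (p j) = (-c') • bVec (A i) (A j) := by
        rw [aVec, hpj, mulVec_camCenter _ _ (hfin j), bVec_anti (A j) (A i),
          Matrix.mulVec_smul, inv_mulVec_cancel (hfin j), smul_neg, ← neg_smul]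
      have h0 : bVec (A i) (A j) ⨯₃ aVec (A j) (p j) = 0 := by
        rw [haj, cross_smul, cross_self, smul_zero]
      rw [h0, dotProduct_zero, mul_zero]

lemma camCenter_eq_of_bVec_eq_zero (A B : Matrix (Fin 3) (Fin 4) ℝ)
    (h : bVec A B = 0) : camCenter A = camCenter B := by
  have : (leftBlock A)⁻¹ *ᵥ tCol A = (leftBlock B)⁻¹ *ᵥ tCol B := sub_eq_zero.mp h
  rw [camCenter, camCenter, this]


/-- for a pair of finite cameras with distinct centers and `j ∈ {1,2}` with
other index `i`: if the center `c_j` has nonnegative depth in `A_i` (i.e. `n_iᵀc_j ≥ 0`)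
then `E_j ⊆ C_𝒜`; otherwise the epipole pair `(e₁₂, e₂₁)` is the only point of `E_j`
lying in `C_𝒜`. -/
theorem Eset_and_CSet_two_views
    (A : Fin 2 → Matrix (Fin 3) (Fin 4) ℝ)
    (hfin : ∀ i, FiniteCam (A i))
    (hdist : camCenter (A 0) ≠ camCenter (A 1))
    (j : Fin 2) :
    (0 ≤ principalRay (A (j + 1)) ⬝ᵥ camCenter (A j) → Eset A j ⊆ CSet A) ∧
    (principalRay (A (j + 1)) ⬝ᵥ camCenter (A j) < 0 →
      ∀ p ∈ Eset A j, (p ∈ CSet A ↔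
        (∃ c : ℝ, c ≠ 0 ∧ p 0 = c • (A 0 *ᵥ camCenter (A 1))) ∧
        (∃ c : ℝ, c ≠ 0 ∧ p 1 = c • (A 1 *ᵥ camCenter (A 0))))) := by
  have hb01 : bVec (A 0) (A 1) ≠ 0 := fun h => hdist (camCenter_eq_of_bVec_eq_zero _ _ h)
  have hb10 : bVec (A 1) (A 0) ≠ 0 := by
    rw [bVec_anti]; exact neg_ne_zero.mpr hb01
  have hj : j = 0 ∨ j = 1 := by omega
  rcases hj with rfl | rfl
  · have h01 : (0 : Fin 2) + 1 = 1 := by decide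
    rw [h01]
    obtain ⟨h1, h2⟩ := master A hfin 1 0 (by decide) hb10
    refine ⟨h1, ?_⟩
    intro hD p hp
    rw [h2 hD p hp]
    constructor
    · intro h
      exact ⟨h, hp.2 1 (by decide)⟩
    · exact fun h => h.1
  · have h11 : (1 : Fin 2) + 1 = 0 := by decide
    rw [h11]
    obtain ⟨h1, h2⟩ := master A hfin 0 1 (by decide) hb01
    refine ⟨h1, ?_⟩
    intro hD p hp
    rw [h2 hD p hp]
    constructor
    · intro h
      exact ⟨hp.2 0 (by decide), h⟩
    · exact fun h => h.2
end
end

section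
/- Let R ∈ SO(3), let t ∈ ℝ³ be nonzero, and let v ∈ ℝ³. Then the 3×3 matrix U = R + t·vᵀ satisfies U·Uᵀ = I (equivalently Uᵀ·U = I) if and only if v = 0 or v = −(2/‖t‖²)·Rᵀt. Consequently, for a Euclidean camera A = [R | t] with t ≠ 0 and a homography H with H⁻¹ = [[I, 0],[vᵀ, δ]], δ ≠ 0, the camera A·H⁻¹ = [R + t·vᵀ | δ·t] is quasi-Euclidean if and only if v = 0 or v = −(2/‖t‖²)·Rᵀt. -/
open Matrix

noncomputable section

/-- The 3x4 camera `[G | t]` with rows `(G_i, t_i)`. -/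
def mkCam (G : Matrix (Fin 3) (Fin 3) ℝ) (t : Fin 3 → ℝ) : Matrix (Fin 3) (Fin 4) ℝ :=
  Matrix.of fun i => Fin.snoc (G i) (t i)

/-- The 4x4 matrix `[[I, 0], [vᵀ, δ]]`. -/
def mkH (v : Fin 3 → ℝ) (δ : ℝ) : Matrix (Fin 4) (Fin 4) ℝ :=
  Matrix.of (Fin.snoc (fun i : Fin 3 => Fin.snoc ((1 : Matrix (Fin 3) (Fin 3) ℝ) i) 0)
    (Fin.snoc v δ))

/-- A camera `[U | t]` is quasi-Euclidean if `U Uᵀ = I`. -/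
def QuasiEuclid (A : Matrix (Fin 3) (Fin 4) ℝ) : Prop :=
  leftBlock A * (leftBlock A).transpose = 1


lemma key3 (t w : Fin 3 → ℝ) (ht : t ≠ 0) (c : ℝ) :
    (∀ i j, w i * t j + t i * w j + c * (t i * t j) = 0) ↔ w = (-(c/2)) • t := by
  constructor
  · intro h
    obtain ⟨j, hj⟩ : ∃ j, t j ≠ 0 := by
      by_contra hc
      push_neg at hc
      exact ht (funext fun i => hc i)
    have hwj : w j = -(c/2) * t j := by
      apply mul_right_cancel₀ hj
      linear_combination (h j j) / 2
    funext i
    apply mul_right_cancel₀ hj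
    show w i * t j = ((-(c/2)) • t) i * t j
    simp only [Pi.smul_apply, smul_eq_mul]
    linear_combination h i j - t i * hwj
  · intro h i j
    subst h
    simp only [Pi.smul_apply, smul_eq_mul]
    ring

lemma expand3 (R : Matrix (Fin 3) (Fin 3) ℝ) (hR : R * R.transpose = 1)
    (t v : Fin 3 → ℝ) :
    (R + Matrix.vecMulVec t v) * (R + Matrix.vecMulVec t v).transpose =
      1 + Matrix.of (fun i j => (R *ᵥ v) i * t j + t i * (R *ᵥ v) j
        + (v ⬝ᵥ v) * (t i * t j)) := by
  ext i j
  have hRij := congrFun (congrFun hR i) j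
  simp only [Matrix.mul_apply, Matrix.add_apply, Matrix.transpose_apply,
    Matrix.vecMulVec_apply, Matrix.of_apply, Matrix.mulVec, dotProduct,
    Fin.sum_univ_three] at *
  linear_combination hRij

lemma mainiff (R : Matrix (Fin 3) (Fin 3) ℝ) (hR : R * R.transpose = 1)
    (t : Fin 3 → ℝ) (ht : t ≠ 0) (v : Fin 3 → ℝ) :
    ((R + Matrix.vecMulVec t v) * (R + Matrix.vecMulVec t v).transpose = 1 ↔
      (v = 0 ∨ v = (-(2 / (t ⬝ᵥ t))) • (R.transpose *ᵥ t))) := by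
  have hR' : R.transpose * R = 1 := mul_eq_one_comm.mp hR
  have hs : t ⬝ᵥ t ≠ 0 := fun h => ht (dotProduct_self_eq_zero.mp h)
  have hnorm : (R.transpose *ᵥ t) ⬝ᵥ (R.transpose *ᵥ t) = t ⬝ᵥ t := by
    rw [Matrix.dotProduct_mulVec, Matrix.vecMul_transpose, Matrix.mulVec_mulVec,
      hR, Matrix.one_mulVec]
  rw [expand3 R hR t v]
  have h1 : (1 + Matrix.of (fun i j => (R *ᵥ v) i * t j + t i * (R *ᵥ v) j
        + (v ⬝ᵥ v) * (t i * t j)) = (1 : Matrix (Fin 3) (Fin 3) ℝ)) ↔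
      ∀ i j, (R *ᵥ v) i * t j + t i * (R *ᵥ v) j + (v ⬝ᵥ v) * (t i * t j) = 0 := by
    rw [add_eq_left]
    constructor
    · intro h i j
      exact congrFun (congrFun h i) j
    · intro h
      ext i j
      exact h i j
  rw [h1, key3 t (R *ᵥ v) ht (v ⬝ᵥ v)]
  set s := t ⬝ᵥ t with hsdef
  set c := v ⬝ᵥ v with hcdef
  constructor
  · intro h
    have hv : v = (-(c/2)) • (R.transpose *ᵥ t) := by
      have h2 : R.transpose *ᵥ (R *ᵥ v) = R.transpose *ᵥ ((-(c/2)) • t) := by rw [h]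
      rwa [Matrix.mulVec_mulVec, hR', Matrix.one_mulVec, Matrix.mulVec_smul] at h2
    by_cases hvz : c = 0
    · left
      exact dotProduct_self_eq_zero.mp (hcdef ▸ hvz)
    · right
      have hc : c = (c/2)^2 * s := by
        rw [hcdef]
        conv_lhs => rw [hv]
        rw [smul_dotProduct, dotProduct_smul, hnorm]
        simp only [smul_eq_mul]
        ring
      have h4 : c * s = 4 := by
        have h5 : (1 : ℝ) = c * s / 4 :=
          mul_left_cancel₀ hvz (show c * 1 = c * (c * s / 4) by linear_combination hc)
        linarith
      have heq : -(c/2) = -(2/s) := by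
        rw [neg_inj, div_eq_div_iff (by norm_num : (2:ℝ) ≠ 0) hs]
        linarith
      rw [hv, heq]
  · rintro (rfl | hv)
    · have hc0 : c = 0 := by simp [hcdef]
      simp [hc0, Matrix.mulVec_zero]
    · have hw : R *ᵥ v = (-(2/s)) • t := by
        rw [hv, Matrix.mulVec_smul, Matrix.mulVec_mulVec, hR, Matrix.one_mulVec]
      have hc4 : c = (2/s)^2 * s := by
        rw [hcdef]
        conv_lhs => rw [hv]
        rw [smul_dotProduct, dotProduct_smul, hnorm]
        simp only [smul_eq_mul]
        ring
      rw [hw, hc4]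
      congr 1
      field_simp

lemma leftBlock_mkCam (G : Matrix (Fin 3) (Fin 3) ℝ) (s : Fin 3 → ℝ) :
    leftBlock (mkCam G s) = G := by
  ext i j
  simp [leftBlock, mkCam, Fin.snoc_castSucc]

lemma camProd (R : Matrix (Fin 3) (Fin 3) ℝ) (t v : Fin 3 → ℝ) (δ : ℝ) :
    mkCam R t * mkH v δ = mkCam (R + Matrix.vecMulVec t v) (δ • t) := by
  ext i j
  rw [Matrix.mul_apply]
  refine Fin.lastCases ?_ (fun j' => ?_) j
  · rw [Fin.sum_univ_castSucc]
    simp only [mkCam, mkH, Matrix.of_apply, Fin.snoc_castSucc, Fin.snoc_last]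
    simp [mkCam, mkH, Fin.snoc_castSucc, Fin.snoc_last, mul_comm]
  · rw [Fin.sum_univ_castSucc]
    simp only [mkCam, mkH, Matrix.of_apply, Fin.snoc_castSucc, Fin.snoc_last]
    simp [mkCam, mkH, Fin.snoc_castSucc, Fin.snoc_last, Matrix.one_apply,
      Matrix.vecMulVec_apply]

/-- for `R ∈ SO(3)`, `t ≠ 0` and `v ∈ ℝ³`, the matrix `U = R + t vᵀ`
satisfies `U Uᵀ = I` (equivalently `Uᵀ U = I`) iff `v = 0` or `v = −(2/‖t‖²) Rᵀ t`.
Consequently, for the Euclidean camera `A = [R|t]` and a homography `H` with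
`H⁻¹ = [[I,0],[vᵀ,δ]]`, `δ ≠ 0`, the camera `A H⁻¹ = [R + t vᵀ | δ t]` is
quasi-Euclidean iff `v = 0` or `v = −(2/‖t‖²) Rᵀ t`. -/
theorem quasiEuclid_iff_twisted_pair
    (R : Matrix (Fin 3) (Fin 3) ℝ) (hR : R * R.transpose = 1) (hRdet : R.det = 1)
    (t : Fin 3 → ℝ) (ht : t ≠ 0) (v : Fin 3 → ℝ) :
    ((R + Matrix.vecMulVec t v) * (R + Matrix.vecMulVec t v).transpose = 1 ↔
      (v = 0 ∨ v = (-(2 / (t ⬝ᵥ t))) • (R.transpose *ᵥ t))) ∧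
    ((R + Matrix.vecMulVec t v).transpose * (R + Matrix.vecMulVec t v) = 1 ↔
      (R + Matrix.vecMulVec t v) * (R + Matrix.vecMulVec t v).transpose = 1) ∧
    (∀ δ : ℝ, δ ≠ 0 →
      mkCam R t * mkH v δ = mkCam (R + Matrix.vecMulVec t v) (δ • t) ∧
      (QuasiEuclid (mkCam R t * mkH v δ) ↔
        (v = 0 ∨ v = (-(2 / (t ⬝ᵥ t))) • (R.transpose *ᵥ t)))) := by
  refine ⟨mainiff R hR t ht v, mul_eq_one_comm, fun δ hδ => ⟨camProd R t v δ, ?_⟩⟩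
  rw [QuasiEuclid, camProd, leftBlock_mkCam]
  exact mainiff R hR t ht v
end
end
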